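/- In a two-player zero-sum game, let (π̄₁, π̄₂) be a Nash equilibrium of the regularized game with utilities 𝒰ᵢ(π₁,π₂) = uᵢ(π₁,π₂) - λᵢ·KL(πᵢ‖τᵢ). Then (π̄₁, π̄₂) is an ε-approximate Nash equilibrium of the original game with utilities uᵢ, where ε = max{λ₁β₁, λ₂β₂} and βᵢ = max_{a∈Aᵢ} log(1/τᵢ(a)). -/
import Mathlib

private lemma kl_nonneg {A : Type*} [Fintype A] (τ p : A → ℝ)
    (hτ0 : ∀ a, 0 < τ a) (hτ1 : ∑ a, τ a = 1)
    (hp0 : ∀ a, 0 ≤ p a) (hp1 : ∑ a, p a = 1) :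
    0 ≤ ∑ a, p a * Real.log (p a / τ a) := by
  have key : ∀ a, p a - τ a ≤ p a * Real.log (p a / τ a) := by
    intro a
    rcases eq_or_lt_of_le (hp0 a) with h | h
    · simp [← h]
      linarith [(hτ0 a).le]
    · have hlog : Real.log (τ a / p a) ≤ τ a / p a - 1 :=
        Real.log_le_sub_one_of_pos (div_pos (hτ0 a) h)
      have hmul : p a * Real.log (τ a / p a) ≤ p a * (τ a / p a - 1) :=
        mul_le_mul_of_nonneg_left hlog h.le
      have hdiv : p a * (τ a / p a - 1) = τ a - p a := by
        field_simp
      have hneg : Real.log (τ a / p a) = -Real.log (p a / τ a) := by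
        rw [Real.log_div (hτ0 a).ne' h.ne', Real.log_div h.ne' (hτ0 a).ne']
        ring
      rw [hneg] at hmul
      linarith
  calc (0:ℝ) = ∑ a, (p a - τ a) := by rw [Finset.sum_sub_distrib, hp1, hτ1]; ring
    _ ≤ _ := Finset.sum_le_sum fun a _ => key a

private lemma kl_le_beta {A : Type*} [Fintype A] (τ p : A → ℝ) (β : ℝ)
    (hτ0 : ∀ a, 0 < τ a)
    (hβ : ∀ a, Real.log (1 / τ a) ≤ β)
    (hp0 : ∀ a, 0 ≤ p a) (hp1 : ∑ a, p a = 1) :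
    ∑ a, p a * Real.log (p a / τ a) ≤ β := by
  have key : ∀ a, p a * Real.log (p a / τ a) ≤ p a * β := by
    intro a
    rcases eq_or_lt_of_le (hp0 a) with h | h
    · simp [← h]
    · have hle1 : p a ≤ 1 := by
        rw [← hp1]
        exact Finset.single_le_sum (fun i _ => hp0 i) (Finset.mem_univ a)
      have hlogp : Real.log (p a) ≤ 0 := Real.log_nonpos h.le hle1
      have hsplit : Real.log (p a / τ a) = Real.log (p a) + Real.log (1 / τ a) := by
        rw [Real.log_div h.ne' (hτ0 a).ne', Real.log_div one_ne_zero (hτ0 a).ne', Real.log_one]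
        ring
      have : Real.log (p a / τ a) ≤ β := by
        rw [hsplit]; linarith [hβ a]
      exact mul_le_mul_of_nonneg_left this h.le
  calc ∑ a, p a * Real.log (p a / τ a) ≤ ∑ a, p a * β := Finset.sum_le_sum fun a _ => key a
    _ = β := by rw [← Finset.sum_mul, hp1, one_mul]

theorem stmt7 {A₁ A₂ : Type*} [Fintype A₁] [Fintype A₂] [Nonempty A₁] [Nonempty A₂]
    (G : A₁ → A₂ → ℝ)
    (τ₁ : A₁ → ℝ) (τ₂ : A₂ → ℝ)
    (hτ₁0 : ∀ a, 0 < τ₁ a) (hτ₂0 : ∀ b, 0 < τ₂ b)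
    (hτ₁1 : ∑ a, τ₁ a = 1) (hτ₂1 : ∑ b, τ₂ b = 1)
    (lam₁ lam₂ : ℝ) (hl₁ : 0 ≤ lam₁) (hl₂ : 0 ≤ lam₂)
    (β₁ β₂ : ℝ)
    (hβ₁ : β₁ = Finset.univ.sup' Finset.univ_nonempty (fun a => Real.log (1 / τ₁ a)))
    (hβ₂ : β₂ = Finset.univ.sup' Finset.univ_nonempty (fun b => Real.log (1 / τ₂ b)))
    (pbar : A₁ → ℝ) (qbar : A₂ → ℝ)
    (hp0 : ∀ a, 0 ≤ pbar a) (hp1 : ∑ a, pbar a = 1)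
    (hq0 : ∀ b, 0 ≤ qbar b) (hq1 : ∑ b, qbar b = 1)
    (hNash₁ : ∀ p : A₁ → ℝ, (∀ a, 0 ≤ p a) → ∑ a, p a = 1 →
      (∑ a, ∑ b, p a * qbar b * G a b) - lam₁ * ∑ a, p a * Real.log (p a / τ₁ a)
        ≤ (∑ a, ∑ b, pbar a * qbar b * G a b)
            - lam₁ * ∑ a, pbar a * Real.log (pbar a / τ₁ a))
    (hNash₂ : ∀ q : A₂ → ℝ, (∀ b, 0 ≤ q b) → ∑ b, q b = 1 →
      (-(∑ a, ∑ b, pbar a * q b * G a b)) - lam₂ * ∑ b, q b * Real.log (q b / τ₂ b)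
        ≤ (-(∑ a, ∑ b, pbar a * qbar b * G a b))
            - lam₂ * ∑ b, qbar b * Real.log (qbar b / τ₂ b)) :
    (∀ p : A₁ → ℝ, (∀ a, 0 ≤ p a) → ∑ a, p a = 1 →
      (∑ a, ∑ b, p a * qbar b * G a b) - (∑ a, ∑ b, pbar a * qbar b * G a b)
        ≤ max (lam₁ * β₁) (lam₂ * β₂)) ∧
    (∀ q : A₂ → ℝ, (∀ b, 0 ≤ q b) → ∑ b, q b = 1 →
      (-(∑ a, ∑ b, pbar a * q b * G a b)) - (-(∑ a, ∑ b, pbar a * qbar b * G a b))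
        ≤ max (lam₁ * β₁) (lam₂ * β₂)) := by
  have hβ₁' : ∀ a, Real.log (1 / τ₁ a) ≤ β₁ := by
    intro a; rw [hβ₁]
    exact Finset.le_sup' (fun a => Real.log (1 / τ₁ a)) (Finset.mem_univ a)
  have hβ₂' : ∀ b, Real.log (1 / τ₂ b) ≤ β₂ := by
    intro b; rw [hβ₂]
    exact Finset.le_sup' (fun b => Real.log (1 / τ₂ b)) (Finset.mem_univ b)
  have hKLp : 0 ≤ ∑ a, pbar a * Real.log (pbar a / τ₁ a) :=
    kl_nonneg τ₁ pbar hτ₁0 hτ₁1 hp0 hp1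
  have hKLq : 0 ≤ ∑ b, qbar b * Real.log (qbar b / τ₂ b) :=
    kl_nonneg τ₂ qbar hτ₂0 hτ₂1 hq0 hq1
  constructor
  · intro p hp0' hp1'
    have h1 := hNash₁ p hp0' hp1'
    have h2 : ∑ a, p a * Real.log (p a / τ₁ a) ≤ β₁ :=
      kl_le_beta τ₁ p β₁ hτ₁0 hβ₁' hp0' hp1'
    have : (∑ a, ∑ b, p a * qbar b * G a b) - (∑ a, ∑ b, pbar a * qbar b * G a b)
        ≤ lam₁ * β₁ := by
      nlinarith [mul_le_mul_of_nonneg_left h2 hl₁, mul_nonneg hl₁ hKLp]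
    exact this.trans (le_max_left _ _)
  · intro q hq0' hq1'
    have h1 := hNash₂ q hq0' hq1'
    have h2 : ∑ b, q b * Real.log (q b / τ₂ b) ≤ β₂ :=
      kl_le_beta τ₂ q β₂ hτ₂0 hβ₂' hq0' hq1'
    have : (-(∑ a, ∑ b, pbar a * q b * G a b)) - (-(∑ a, ∑ b, pbar a * qbar b * G a b))
        ≤ lam₂ * β₂ := by
      nlinarith [mul_le_mul_of_nonneg_left h2 hl₂, mul_nonneg hl₂ hKLq]
    exact this.trans (le_max_right _ _)
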